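/- Let X ~ Exp(1-ρ), Y ~ Exp(ρ), W ~ Exp(1) be independent, 0 < ρ < 1. Then for s < 1-ρ, t < ρ, u < 1, the joint moment generating function satisfies E[exp(s((X-Y)^+ + W) + t((Y-X)^+ + W) + u·min(X,Y))] = ρ(1-ρ)/((1-ρ-s)(ρ-t)(1-u)). -/

import Mathlib

open MeasureTheory ProbabilityTheory

open Real Set
open scoped ENNReal


lemma key_lintegral {r c : ℝ} (a d : ℝ) (hr : 0 < r) (hc : c < r) :
    ∫⁻ x in Set.Ioi a, ENNReal.ofReal (r * Real.exp (-(r * x)) * Real.exp (c * x + d)) =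
      ENNReal.ofReal (r / (r - c) * Real.exp (-((r - c) * a) + d)) := by
  have hrc : 0 < r - c := by linarith
  have hfun : ∀ x : ℝ, r * Real.exp (-(r * x)) * Real.exp (c * x + d)
      = (r * Real.exp d) * Real.exp (-((r - c) * x)) := by
    intro x
    rw [mul_assoc, ← Real.exp_add, mul_assoc, ← Real.exp_add]
    ring_nf
  simp only [hfun]
  have hint : IntegrableOn (fun x : ℝ => (r * Real.exp d) * Real.exp (-((r - c) * x)))
      (Set.Ioi a) := by
    have := (exp_neg_integrableOn_Ioi a hrc).const_mul (r * Real.exp d)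
    simpa [IntegrableOn, show ∀ x : ℝ, -((r - c) * x) = (c - r) * x from fun x => by ring] using this
  rw [← ofReal_integral_eq_lintegral_ofReal hint
      (Filter.Eventually.of_forall fun x => by positivity)]
  congr 1
  rw [MeasureTheory.integral_const_mul]
  have : ∫ x in Set.Ioi a, Real.exp (-((r - c) * x))
      = Real.exp (-((r - c) * a)) / (r - c) := by
    have h := MeasureTheory.integral_comp_mul_left_Ioi (fun x => Real.exp (-x)) a hrc
    simp only [smul_eq_mul] at h
    rw [h, integral_exp_neg_Ioi]
    ring
  rw [this, Real.exp_add]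
  ring

lemma exp_density {r : ℝ} (f : ℝ → ℝ≥0∞) (hf : Measurable f) :
    ∫⁻ x, f x ∂(expMeasure r) = ∫⁻ x in Set.Ioi 0, ENNReal.ofReal (r * Real.exp (-(r * x))) * f x := by
  have hpdf : Measurable (exponentialPDF r) := by
    unfold exponentialPDF
    exact (measurable_exponentialPDFReal r).ennreal_ofReal
  rw [show expMeasure r = volume.withDensity (exponentialPDF r) from rfl,
    lintegral_withDensity_eq_lintegral_mul _ hpdf hf]
  have hsplit := lintegral_add_compl (μ := volume) (fun x => (exponentialPDF r * f) x)
    (measurableSet_Iio (a := (0:ℝ)))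
  rw [compl_Iio] at hsplit
  rw [← hsplit]
  have h1 : ∫⁻ x in Set.Iio 0, (exponentialPDF r * f) x = 0 := by
    rw [setLIntegral_congr_fun measurableSet_Iio
      (fun x (hx : x < 0) =>
        show (exponentialPDF r * f) x = 0 by
          simp [exponentialPDF_of_neg hx])]
    simp
  have h2 : ∫⁻ x in Set.Ici 0, (exponentialPDF r * f) x = ∫⁻ x in Set.Ioi 0,
      ENNReal.ofReal (r * Real.exp (-(r * x))) * f x := by
    rw [← Measure.restrict_congr_set Ioi_ae_eq_Ici]
    exact setLIntegral_congr_fun measurableSet_Ioi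
      (fun x (hx : 0 < x) =>
        show (exponentialPDF r * f) x = ENNReal.ofReal (r * Real.exp (-(r * x))) * f x by
          simp [exponentialPDF_of_nonneg hx.le])
  rw [h1, h2, zero_add]

lemma twoDim (ρ s t u : ℝ) (hρ0 : 0 < ρ) (hρ1 : ρ < 1)
    (hs : s < 1 - ρ) (ht : t < ρ) (hu : u < 1) :
    ∫⁻ p : ℝ × ℝ, ENNReal.ofReal (Real.exp (s * max (p.1 - p.2) 0 + t * max (p.2 - p.1) 0 +
        u * min p.1 p.2)) ∂((expMeasure (1 - ρ)).prod (expMeasure ρ)) =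
      ENNReal.ofReal ((1 - ρ) / (1 - ρ - s) * (ρ / (1 - u)) +
        ρ / (ρ - t) * ((1 - ρ) / (1 - u))) := by
  have h1ρ : (0:ℝ) < 1 - ρ := by linarith
  haveI := isProbabilityMeasure_expMeasure h1ρ
  haveI := isProbabilityMeasure_expMeasure hρ0
  set G : ℝ × ℝ → ℝ≥0∞ := fun p => ENNReal.ofReal (Real.exp (s * max (p.1 - p.2) 0 +
    t * max (p.2 - p.1) 0 + u * min p.1 p.2)) with hG
  have hGm : Measurable G := by
    apply Measurable.ennreal_ofReal
    apply Real.measurable_exp.comp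
    fun_prop
  set A : Set (ℝ × ℝ) := {p | p.2 < p.1} with hAdef
  have hA : MeasurableSet A := measurableSet_lt measurable_snd measurable_fst
  have hsplit : ∀ p, G p = A.indicator G p + Aᶜ.indicator G p := fun p => by
    rw [← Set.indicator_self_add_compl_apply A G p]
  have hK1 : ∫⁻ p, A.indicator G p ∂((expMeasure (1 - ρ)).prod (expMeasure ρ)) =
      ENNReal.ofReal ((1 - ρ) / (1 - ρ - s)) * ENNReal.ofReal (ρ / (1 - u)) := by
    rw [lintegral_prod_symm _ ((hGm.indicator hA).aemeasurable)]
    have hinnerm : Measurable (fun y => ∫⁻ x, A.indicator G (x, y) ∂(expMeasure (1 - ρ))) := by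
      apply Measurable.lintegral_prod_left
      exact (hGm.indicator hA)
    rw [exp_density _ hinnerm]
    have hinner : ∀ y ∈ Set.Ioi (0:ℝ),
        ENNReal.ofReal (ρ * Real.exp (-(ρ * y))) *
          (∫⁻ x, A.indicator G (x, y) ∂(expMeasure (1 - ρ))) =
        ENNReal.ofReal ((1 - ρ) / (1 - ρ - s)) *
          ENNReal.ofReal (ρ * Real.exp (-(ρ * y)) * Real.exp ((u - 1 + ρ) * y + 0)) := by
      intro y hy
      have hy0 : (0:ℝ) < y := hy
      have hx_eq : ∫⁻ x, A.indicator G (x, y) ∂(expMeasure (1 - ρ)) =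
          ENNReal.ofReal ((1 - ρ) / (1 - ρ - s) * Real.exp (-((1 - ρ - s) * y) + (u - s) * y)) := by
        rw [exp_density (fun x => A.indicator G (x, y))
          ((hGm.indicator hA).comp (measurable_id.prodMk measurable_const))]
        have hptw : ∀ x ∈ Set.Ioi (0:ℝ),
            ENNReal.ofReal ((1 - ρ) * Real.exp (-((1 - ρ) * x))) * A.indicator G (x, y) =
            (Set.Ioi y).indicator (fun x => ENNReal.ofReal ((1 - ρ) * Real.exp (-((1 - ρ) * x)) *
              Real.exp (s * x + (u - s) * y))) x := by
          intro x _
          by_cases hxy : y < x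
          · rw [Set.indicator_of_mem (show (x, y) ∈ A from hxy),
              Set.indicator_of_mem (show x ∈ Set.Ioi y from hxy),
              ← ENNReal.ofReal_mul (by positivity)]
            congr 2
            show Real.exp (s * max (x - y) 0 + t * max (y - x) 0 + u * min x y) = _
            rw [max_eq_left (by linarith : (0:ℝ) ≤ x - y), max_eq_right (by linarith : y - x ≤ (0:ℝ)),
              min_eq_right hxy.le]
            congr 1
            ring
          · rw [Set.indicator_of_notMem (show (x, y) ∉ A from hxy),
              Set.indicator_of_notMem (show x ∉ Set.Ioi y from hxy)]
            simp
        rw [setLIntegral_congr_fun measurableSet_Ioi hptw,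
          lintegral_indicator measurableSet_Ioi _,
          Measure.restrict_restrict measurableSet_Ioi,
          Set.inter_eq_left.mpr (Set.Ioi_subset_Ioi hy0.le),
          key_lintegral y ((u - s) * y) h1ρ hs]
      have hsρ : (0:ℝ) < 1 - ρ - s := by linarith
      rw [hx_eq, ← ENNReal.ofReal_mul (by positivity),
        ← ENNReal.ofReal_mul (le_of_lt (div_pos h1ρ hsρ))]
      congr 1
      have hexp : Real.exp (-(ρ * y)) * Real.exp (-((1 - ρ - s) * y) + (u - s) * y) =
          Real.exp (-(ρ * y)) * Real.exp ((u - 1 + ρ) * y + 0) := by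
        rw [← Real.exp_add, ← Real.exp_add]
        congr 1
        ring
      linear_combination (ρ * ((1 - ρ) / (1 - ρ - s))) * hexp
    rw [setLIntegral_congr_fun measurableSet_Ioi hinner,
      lintegral_const_mul' _ _ ENNReal.ofReal_ne_top,
      key_lintegral 0 0 hρ0 (by linarith : u - 1 + ρ < ρ)]
    congr 1
    rw [show ρ - (u - 1 + ρ) = 1 - u by ring]
    norm_num
  have hK2 : ∫⁻ p, Aᶜ.indicator G p ∂((expMeasure (1 - ρ)).prod (expMeasure ρ)) =
      ENNReal.ofReal (ρ / (ρ - t)) * ENNReal.ofReal ((1 - ρ) / (1 - u)) := by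
    rw [lintegral_prod _ ((hGm.indicator hA.compl).aemeasurable)]
    have hinnerm : Measurable (fun x => ∫⁻ y, Aᶜ.indicator G (x, y) ∂(expMeasure ρ)) :=
      (hGm.indicator hA.compl).lintegral_prod_right'
    rw [exp_density _ hinnerm]
    have hinner : ∀ x ∈ Set.Ioi (0:ℝ),
        ENNReal.ofReal ((1 - ρ) * Real.exp (-((1 - ρ) * x))) *
          (∫⁻ y, Aᶜ.indicator G (x, y) ∂(expMeasure ρ)) =
        ENNReal.ofReal (ρ / (ρ - t)) *
          ENNReal.ofReal ((1 - ρ) * Real.exp (-((1 - ρ) * x)) * Real.exp ((u - ρ) * x + 0)) := by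
      intro x hx
      have hx0 : (0:ℝ) < x := hx
      have hy_eq : ∫⁻ y, Aᶜ.indicator G (x, y) ∂(expMeasure ρ) =
          ENNReal.ofReal (ρ / (ρ - t) * Real.exp (-((ρ - t) * x) + (u - t) * x)) := by
        rw [exp_density (fun y => Aᶜ.indicator G (x, y))
          ((hGm.indicator hA.compl).comp (measurable_const.prodMk measurable_id))]
        have hptw : ∀ y ∈ Set.Ioi (0:ℝ),
            ENNReal.ofReal (ρ * Real.exp (-(ρ * y))) * Aᶜ.indicator G (x, y) =
            (Set.Ici x).indicator (fun y => ENNReal.ofReal (ρ * Real.exp (-(ρ * y)) *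
              Real.exp (t * y + (u - t) * x))) y := by
          intro y _
          by_cases hxy : x ≤ y
          · rw [Set.indicator_of_mem (show (x, y) ∈ Aᶜ from not_lt.mpr hxy),
              Set.indicator_of_mem (show y ∈ Set.Ici x from hxy),
              ← ENNReal.ofReal_mul (by positivity)]
            congr 2
            show Real.exp (s * max (x - y) 0 + t * max (y - x) 0 + u * min x y) = _
            rw [max_eq_right (by linarith : x - y ≤ (0:ℝ)),
              max_eq_left (by linarith : (0:ℝ) ≤ y - x), min_eq_left hxy]
            congr 1
            ring
          · rw [Set.indicator_of_notMem
                (show (x, y) ∉ Aᶜ by simp only [Set.mem_compl_iff, not_not]; exact not_le.mp hxy),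
              Set.indicator_of_notMem (show y ∉ Set.Ici x from hxy)]
            simp
        rw [setLIntegral_congr_fun measurableSet_Ioi hptw,
          lintegral_indicator measurableSet_Ici _,
          Measure.restrict_restrict measurableSet_Ici,
          show Set.Ici x ∩ Set.Ioi (0:ℝ) = Set.Ici x from
            Set.inter_eq_left.mpr (fun z hz => lt_of_lt_of_le hx0 hz),
          ← Measure.restrict_congr_set Ioi_ae_eq_Ici,
          key_lintegral x ((u - t) * x) hρ0 ht]
      have htρ : (0:ℝ) < ρ - t := by linarith
      rw [hy_eq, ← ENNReal.ofReal_mul (by positivity),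
        ← ENNReal.ofReal_mul (le_of_lt (div_pos hρ0 htρ))]
      congr 1
      have hexp : Real.exp (-((1 - ρ) * x)) * Real.exp (-((ρ - t) * x) + (u - t) * x) =
          Real.exp (-((1 - ρ) * x)) * Real.exp ((u - ρ) * x + 0) := by
        rw [← Real.exp_add, ← Real.exp_add]
        congr 1
        ring
      linear_combination ((1 - ρ) * (ρ / (ρ - t))) * hexp
    rw [setLIntegral_congr_fun measurableSet_Ioi hinner,
      lintegral_const_mul' _ _ ENNReal.ofReal_ne_top,
      key_lintegral 0 0 h1ρ (by linarith : u - ρ < 1 - ρ)]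
    congr 1
    rw [show 1 - ρ - (u - ρ) = 1 - u by ring]
    norm_num
  calc ∫⁻ p : ℝ × ℝ, G p ∂((expMeasure (1 - ρ)).prod (expMeasure ρ))
      = ∫⁻ p, (A.indicator G p + Aᶜ.indicator G p) ∂((expMeasure (1 - ρ)).prod (expMeasure ρ)) :=
        lintegral_congr hsplit
    _ = (∫⁻ p, A.indicator G p ∂((expMeasure (1 - ρ)).prod (expMeasure ρ))) +
        ∫⁻ p, Aᶜ.indicator G p ∂((expMeasure (1 - ρ)).prod (expMeasure ρ)) :=
        lintegral_add_left (hGm.indicator hA) _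
    _ = ENNReal.ofReal ((1 - ρ) / (1 - ρ - s) * (ρ / (1 - u)) +
        ρ / (ρ - t) * ((1 - ρ) / (1 - u))) := by
        rw [hK1, hK2, ← ENNReal.ofReal_mul (le_of_lt (div_pos h1ρ (by linarith))),
          ← ENNReal.ofReal_mul (le_of_lt (div_pos hρ0 (by linarith))),
          ← ENNReal.ofReal_add (le_of_lt (mul_pos (div_pos h1ρ (by linarith))
            (div_pos hρ0 (by linarith))))
            (le_of_lt (mul_pos (div_pos hρ0 (by linarith)) (div_pos h1ρ (by linarith))))]

lemma wPart (c : ℝ) (hc : c < 1) :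
    ∫⁻ w, ENNReal.ofReal (Real.exp (c * w)) ∂(expMeasure 1) = ENNReal.ofReal (1 / (1 - c)) := by
  rw [exp_density (fun w => ENNReal.ofReal (Real.exp (c * w)))
    (by fun_prop)]
  have hptw : ∀ x ∈ Set.Ioi (0:ℝ),
      ENNReal.ofReal (1 * Real.exp (-(1 * x))) * ENNReal.ofReal (Real.exp (c * x)) =
      ENNReal.ofReal (1 * Real.exp (-(1 * x)) * Real.exp (c * x + 0)) := by
    intro x _
    rw [← ENNReal.ofReal_mul (by positivity)]
    norm_num
  rw [setLIntegral_congr_fun measurableSet_Ioi hptw,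
    key_lintegral 0 0 one_pos hc]
  norm_num

theorem stmt_1 {Ω : Type*} [MeasureSpace Ω] {μ : Measure Ω} [IsProbabilityMeasure μ]
    (ρ : ℝ) (hρ0 : 0 < ρ) (hρ1 : ρ < 1)
    (X Y W : Ω → ℝ)
    (hindep : iIndepFun ![X, Y, W] μ)
    (hX : μ.map X = expMeasure (1 - ρ))
    (hY : μ.map Y = expMeasure ρ)
    (hW : μ.map W = expMeasure 1)
    (s t u : ℝ) (hs : s < 1 - ρ) (ht : t < ρ) (hu : u < 1) :
    ∫ ω, Real.exp (s * (max (X ω - Y ω) 0 + W ω) +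
        t * (max (Y ω - X ω) 0 + W ω) + u * min (X ω) (Y ω)) ∂μ =
      ρ * (1 - ρ) / ((1 - ρ - s) * (ρ - t) * (1 - u)) := by
  have h1ρ : (0:ℝ) < 1 - ρ := by linarith
  haveI i1 : IsProbabilityMeasure (expMeasure (1 - ρ)) := isProbabilityMeasure_expMeasure h1ρ
  haveI i2 : IsProbabilityMeasure (expMeasure ρ) := isProbabilityMeasure_expMeasure hρ0
  haveI i3 : IsProbabilityMeasure (expMeasure 1) := isProbabilityMeasure_expMeasure one_pos
  have hXa : AEMeasurable X μ := aemeasurable_of_map_neZero (by rw [hX]; exact ⟨IsProbabilityMeasure.ne_zero _⟩)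
  have hYa : AEMeasurable Y μ := aemeasurable_of_map_neZero (by rw [hY]; exact ⟨IsProbabilityMeasure.ne_zero _⟩)
  have hWa : AEMeasurable W μ := aemeasurable_of_map_neZero (by rw [hW]; exact ⟨IsProbabilityMeasure.ne_zero _⟩)
  set X' := hXa.mk X with hX'def
  set Y' := hYa.mk Y with hY'def
  set W' := hWa.mk W with hW'def
  have hX'm : Measurable X' := hXa.measurable_mk
  have hY'm : Measurable Y' := hYa.measurable_mk
  have hW'm : Measurable W' := hWa.measurable_mk
  have hvec : ∀ᵐ ω ∂μ, X ω = X' ω ∧ Y ω = Y' ω ∧ W ω = W' ω := by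
    filter_upwards [hXa.ae_eq_mk, hYa.ae_eq_mk, hWa.ae_eq_mk] with ω h1 h2 h3
    exact ⟨h1, h2, h3⟩
  have hmapX' : μ.map X' = expMeasure (1 - ρ) := by
    rw [← Measure.map_congr hXa.ae_eq_mk, hX]
  have hmapY' : μ.map Y' = expMeasure ρ := by
    rw [← Measure.map_congr hYa.ae_eq_mk, hY]
  have hmapW' : μ.map W' = expMeasure 1 := by
    rw [← Measure.map_congr hWa.ae_eq_mk, hW]
  -- transfer independence to measurable versions
  have hindep' : iIndepFun ![X', Y', W'] μ := by
    rw [iIndepFun_iff_measure_inter_preimage_eq_mul] at hindep ⊢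
    intro S sets hsets
    have hfun : ∀ᵐ ω ∂μ, ∀ i : Fin 3, ![X, Y, W] i ω = ![X', Y', W'] i ω := by
      filter_upwards [hvec] with ω h i
      fin_cases i <;> simp [h.1, h.2.1, h.2.2]
    have hpre : ∀ i : Fin 3, μ (![X', Y', W'] i ⁻¹' sets i) = μ (![X, Y, W] i ⁻¹' sets i) := by
      intro i
      apply measure_congr
      filter_upwards [hfun] with ω h
      simp only [eq_iff_iff]
      show ![X', Y', W'] i ω ∈ sets i ↔ ![X, Y, W] i ω ∈ sets i
      rw [h i]
    have hint : μ (⋂ i ∈ S, ![X', Y', W'] i ⁻¹' sets i) =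
        μ (⋂ i ∈ S, ![X, Y, W] i ⁻¹' sets i) := by
      apply measure_congr
      filter_upwards [hfun] with ω h
      simp only [eq_iff_iff]
      show ω ∈ ⋂ i ∈ S, ![X', Y', W'] i ⁻¹' sets i ↔ ω ∈ ⋂ i ∈ S, ![X, Y, W] i ⁻¹' sets i
      simp only [Set.mem_iInter, Set.mem_preimage]
      constructor <;> intro hh i hi
      · rw [h i]; exact hh i hi
      · rw [← h i]; exact hh i hi
    rw [hint, hindep S hsets]
    exact Finset.prod_congr rfl fun i _ => (hpre i).symm
  have hmeas3 : ∀ i : Fin 3, Measurable (![X', Y', W'] i) := by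
    intro i; fin_cases i <;> simpa using ‹_›
  have hXY : IndepFun X' Y' μ := by
    have := hindep'.indepFun (show (0 : Fin 3) ≠ 1 by decide)
    simpa using this
  have hPW : IndepFun (fun ω => (X' ω, Y' ω)) W' μ := by
    have := hindep'.indepFun_prodMk hmeas3 0 1 2 (by decide) (by decide)
    simpa using this
  have hmapXY : μ.map (fun ω => (X' ω, Y' ω)) = (expMeasure (1 - ρ)).prod (expMeasure ρ) := by
    rw [← hmapX', ← hmapY']
    exact (indepFun_iff_map_prod_eq_prod_map_map hX'm.aemeasurable hY'm.aemeasurable).mp hXY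
  have hmapT : μ.map (fun ω => ((X' ω, Y' ω), W' ω)) =
      ((expMeasure (1 - ρ)).prod (expMeasure ρ)).prod (expMeasure 1) := by
    rw [← hmapXY, ← hmapW']
    exact (indepFun_iff_map_prod_eq_prod_map_map
      (hX'm.prodMk hY'm).aemeasurable hW'm.aemeasurable).mp hPW
  -- the function on the product space
  set Φ : (ℝ × ℝ) × ℝ → ℝ := fun z => Real.exp (s * (max (z.1.1 - z.1.2) 0 + z.2) +
    t * (max (z.1.2 - z.1.1) 0 + z.2) + u * min z.1.1 z.1.2) with hΦdef
  have hΦm : Measurable Φ := by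
    apply Real.measurable_exp.comp
    fun_prop
  have hTm : Measurable (fun ω => ((X' ω, Y' ω), W' ω)) := (hX'm.prodMk hY'm).prodMk hW'm
  -- replace X Y W by primed versions in the integral
  have hcongr : ∫ ω, Real.exp (s * (max (X ω - Y ω) 0 + W ω) +
      t * (max (Y ω - X ω) 0 + W ω) + u * min (X ω) (Y ω)) ∂μ =
      ∫ ω, Φ ((X' ω, Y' ω), W' ω) ∂μ := by
    apply integral_congr_ae
    filter_upwards [hvec] with ω h
    rw [hΦdef]
    simp only [h.1, h.2.1, h.2.2]
  rw [hcongr]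
  have hnn : 0 ≤ᵐ[μ] fun ω => Φ ((X' ω, Y' ω), W' ω) :=
    Filter.Eventually.of_forall fun ω => (Real.exp_pos _).le
  rw [integral_eq_lintegral_of_nonneg_ae hnn (hΦm.comp hTm).aestronglyMeasurable]
  have hlift : ∫⁻ ω, ENNReal.ofReal (Φ ((X' ω, Y' ω), W' ω)) ∂μ =
      ∫⁻ z, ENNReal.ofReal (Φ z) ∂(((expMeasure (1 - ρ)).prod (expMeasure ρ)).prod
        (expMeasure 1)) := by
    rw [← hmapT, lintegral_map hΦm.ennreal_ofReal hTm]
  rw [hlift]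
  set G : ℝ × ℝ → ℝ≥0∞ := fun p => ENNReal.ofReal (Real.exp (s * max (p.1 - p.2) 0 +
    t * max (p.2 - p.1) 0 + u * min p.1 p.2)) with hGdef
  set H : ℝ → ℝ≥0∞ := fun w => ENNReal.ofReal (Real.exp ((s + t) * w)) with hHdef
  have hfactor : ∀ z : (ℝ × ℝ) × ℝ, ENNReal.ofReal (Φ z) = G z.1 * H z.2 := by
    intro z
    rw [hGdef, hHdef, hΦdef]
    simp only
    rw [← ENNReal.ofReal_mul (Real.exp_pos _).le, ← Real.exp_add]
    congr 1
    ring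
  rw [lintegral_congr hfactor]
  have hGm : Measurable G := by
    apply Measurable.ennreal_ofReal
    apply Real.measurable_exp.comp
    fun_prop
  have hHm : Measurable H := by
    apply Measurable.ennreal_ofReal
    apply Real.measurable_exp.comp
    fun_prop
  rw [lintegral_prod_mul hGm.aemeasurable hHm.aemeasurable]
  rw [hGdef, hHdef]
  rw [twoDim ρ s t u hρ0 hρ1 hs ht hu, wPart (s + t) (by linarith)]
  -- arithmetic
  have hd1 : (0:ℝ) < 1 - ρ - s := by linarith
  have hd2 : (0:ℝ) < ρ - t := by linarith
  have hd3 : (0:ℝ) < 1 - u := by linarith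
  have hd4 : (0:ℝ) < 1 - (s + t) := by linarith
  have hA : (0:ℝ) ≤ (1 - ρ) / (1 - ρ - s) * (ρ / (1 - u)) + ρ / (ρ - t) * ((1 - ρ) / (1 - u)) :=
    le_of_lt (add_pos (mul_pos (div_pos h1ρ hd1) (div_pos hρ0 hd3))
      (mul_pos (div_pos hρ0 hd2) (div_pos h1ρ hd3)))
  rw [← ENNReal.ofReal_mul hA, ENNReal.toReal_ofReal (by positivity)]
  field_simp
  ring_nf
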